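/- Let T > 0 and let f : [0,T]×ℝ^d → ℝ be measurable with sup_{t ≤ T} ‖f(t,·)‖_∞ < ∞ and f(t,·) continuous for each t. Let (μ^n_•)_{n} and μ_• be càdlàg paths [0,T] → (Borel probability measures on ℝ^d with finite second moment, W) such that ρ(μ^n_•, μ_•) → 0, where ρ is the Skorokhod metric built from W. Then ∫₀^T ∫_{ℝ^d} f(t,v) μ^n_t(dv) dt → ∫₀^T ∫_{ℝ^d} f(t,v) μ_t(dv) dt as n → ∞. -/

import Mathlib

open MeasureTheory Filter Set
open scoped ENNReal Topology NNReal

/-- The bounded-Lipschitz metric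
`W(μ,ν) = sup{∫ f dμ − ∫ f dν : ‖f‖_∞ ≤ 1, Lip(f) ≤ 1}`. -/
noncomputable def blDist (d : ℕ) (μ ν : Measure (EuclideanSpace ℝ (Fin d))) : ℝ :=
  ⨆ f : {f : EuclideanSpace ℝ (Fin d) → ℝ // (∀ x, |f x| ≤ 1) ∧ LipschitzWith 1 f},
    (∫ x, f.1 x ∂μ) - ∫ x, f.1 x ∂ν

/-- A measure-valued path which is càdlàg with respect to the bounded-Lipschitz metric
`W` on `[0,T]`: right-continuous in `W`, with left limits in `W`. -/
def CadlagW (d : ℕ) (T : ℝ) (μ : ℝ → Measure (EuclideanSpace ℝ (Fin d))) : Prop :=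
  (∀ t ∈ Set.Ico (0 : ℝ) T,
    Tendsto (fun s => blDist d (μ s) (μ t)) (nhdsWithin t (Set.Ioc t T)) (𝓝 0)) ∧
  (∀ t ∈ Set.Ioc (0 : ℝ) T, ∃ ν : Measure (EuclideanSpace ℝ (Fin d)),
    Tendsto (fun s => blDist d (μ s) ν) (nhdsWithin t (Set.Ico 0 t)) (𝓝 0))

/-- The Skorokhod metric on measure-valued paths built from the bounded-Lipschitz
metric `W`: the infimum over increasing continuous bijections `ι : [0,T] → [0,T]` of
`max(sup_{t≤T} W(x(t), y(ι(t))), sup_{t≤T} |t − ι(t)|)`. -/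
noncomputable def skorokhodW (d : ℕ) (T : ℝ)
    (x y : ℝ → Measure (EuclideanSpace ℝ (Fin d))) : ℝ :=
  ⨅ ι : {ι : ℝ → ℝ // ContinuousOn ι (Set.Icc 0 T) ∧ StrictMonoOn ι (Set.Icc 0 T) ∧
      Set.BijOn ι (Set.Icc 0 T) (Set.Icc 0 T)},
    max (⨆ t : Set.Icc (0 : ℝ) T, blDist d (x t) (y (ι.1 t)))
        (⨆ t : Set.Icc (0 : ℝ) T, |(t : ℝ) - ι.1 t|)

section Aux

variable {d : ℕ}

lemma blDist_eq (μ ν : Measure (EuclideanSpace ℝ (Fin d))) :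
    blDist d μ ν = ⨆ f : {f : EuclideanSpace ℝ (Fin d) → ℝ //
      (∀ x, |f x| ≤ 1) ∧ LipschitzWith 1 f}, (∫ x, f.1 x ∂μ) - ∫ x, f.1 x ∂ν := rfl

lemma adm_nonempty :
    Nonempty {f : EuclideanSpace ℝ (Fin d) → ℝ // (∀ x, |f x| ≤ 1) ∧ LipschitzWith 1 f} :=
  ⟨⟨fun _ => 0, ⟨fun _ => by simp, (LipschitzWith.const 0).weaken zero_le_one⟩⟩⟩

lemma adm_integrable (μ : Measure (EuclideanSpace ℝ (Fin d))) [IsFiniteMeasure μ]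
    (f : {f : EuclideanSpace ℝ (Fin d) → ℝ // (∀ x, |f x| ≤ 1) ∧ LipschitzWith 1 f}) :
    Integrable f.1 μ :=
  (integrable_const (1:ℝ)).mono' f.2.2.continuous.aestronglyMeasurable
    (Eventually.of_forall fun x => by simpa [Real.norm_eq_abs] using f.2.1 x)

lemma adm_abs_integral_le (μ : Measure (EuclideanSpace ℝ (Fin d))) [IsProbabilityMeasure μ]
    (f : {f : EuclideanSpace ℝ (Fin d) → ℝ // (∀ x, |f x| ≤ 1) ∧ LipschitzWith 1 f}) :
    |∫ x, f.1 x ∂μ| ≤ 1 := by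
  have := norm_integral_le_of_norm_le_const (μ := μ) (f := f.1) (C := 1)
    (Eventually.of_forall fun x => by simpa [Real.norm_eq_abs] using f.2.1 x)
  simpa [Real.norm_eq_abs] using this

lemma blDist_bddAbove (μ ν : Measure (EuclideanSpace ℝ (Fin d)))
    [IsProbabilityMeasure μ] [IsProbabilityMeasure ν] :
    BddAbove (Set.range fun f : {f : EuclideanSpace ℝ (Fin d) → ℝ //
      (∀ x, |f x| ≤ 1) ∧ LipschitzWith 1 f} => (∫ x, f.1 x ∂μ) - ∫ x, f.1 x ∂ν) := by
  refine ⟨2, ?_⟩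
  rintro y ⟨f, rfl⟩
  have h1 := abs_le.1 (adm_abs_integral_le μ f)
  have h2 := abs_le.1 (adm_abs_integral_le ν f)
  dsimp only
  linarith [h1.2, h2.1]

lemma blDist_le_two (μ ν : Measure (EuclideanSpace ℝ (Fin d)))
    [IsProbabilityMeasure μ] [IsProbabilityMeasure ν] : blDist d μ ν ≤ 2 := by
  haveI := adm_nonempty (d := d)
  rw [blDist_eq]
  refine ciSup_le fun f => ?_
  have h1 := abs_le.1 (adm_abs_integral_le μ f)
  have h2 := abs_le.1 (adm_abs_integral_le ν f)
  linarith [h1.2, h2.1]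

lemma blDist_nonneg (μ ν : Measure (EuclideanSpace ℝ (Fin d)))
    [IsProbabilityMeasure μ] [IsProbabilityMeasure ν] : 0 ≤ blDist d μ ν := by
  have := le_ciSup (blDist_bddAbove μ ν)
    (⟨fun _ => 0, ⟨fun _ => by simp, (LipschitzWith.const 0).weaken zero_le_one⟩⟩ :
      {f : EuclideanSpace ℝ (Fin d) → ℝ // (∀ x, |f x| ≤ 1) ∧ LipschitzWith 1 f})
  rw [blDist_eq]
  simpa using this

lemma blDist_self (μ : Measure (EuclideanSpace ℝ (Fin d))) : blDist d μ μ = 0 := by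
  haveI := adm_nonempty (d := d)
  rw [blDist_eq]
  simp only [sub_self]
  exact ciSup_const

lemma blDist_comm (μ ν : Measure (EuclideanSpace ℝ (Fin d)))
    [IsProbabilityMeasure μ] [IsProbabilityMeasure ν] : blDist d μ ν = blDist d ν μ := by
  have key : ∀ (α β : Measure (EuclideanSpace ℝ (Fin d))),
      IsProbabilityMeasure α → IsProbabilityMeasure β → blDist d α β ≤ blDist d β α := by
    intro α β hα hβ
    haveI := hα; haveI := hβ
    haveI := adm_nonempty (d := d)
    rw [blDist_eq, blDist_eq]
    refine ciSup_le fun f => ?_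
    have hlip : LipschitzWith 1 (fun x => -(f.1 x)) := by
      refine LipschitzWith.of_dist_le_mul fun x y => ?_
      have := f.2.2.dist_le_mul x y
      simpa [Real.dist_eq, abs_sub_comm, neg_sub_neg] using this
    have := le_ciSup (blDist_bddAbove β α)
      (⟨fun x => -(f.1 x), ⟨fun x => by simpa using f.2.1 x, hlip⟩⟩ :
        {f : EuclideanSpace ℝ (Fin d) → ℝ // (∀ x, |f x| ≤ 1) ∧ LipschitzWith 1 f})
    have h2 : (∫ x, -(f.1 x) ∂β) - ∫ x, -(f.1 x) ∂α ≤
        ⨆ f : {f : EuclideanSpace ℝ (Fin d) → ℝ //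
          (∀ x, |f x| ≤ 1) ∧ LipschitzWith 1 f},
          (∫ x, f.1 x ∂β) - ∫ x, f.1 x ∂α := this
    rw [integral_neg, integral_neg] at h2
    linarith
  exact le_antisymm (key μ ν inferInstance inferInstance) (key ν μ inferInstance inferInstance)

lemma blDist_triangle (μ ν ρ : Measure (EuclideanSpace ℝ (Fin d)))
    [IsProbabilityMeasure μ] [IsProbabilityMeasure ν] [IsProbabilityMeasure ρ] :
    blDist d μ ρ ≤ blDist d μ ν + blDist d ν ρ := by
  haveI := adm_nonempty (d := d)
  have b1 := blDist_bddAbove μ ν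
  have b2 := blDist_bddAbove ν ρ
  rw [blDist_eq, blDist_eq, blDist_eq]
  refine ciSup_le fun f => ?_
  have h1 := le_ciSup b1 f
  have h2 := le_ciSup b2 f
  try dsimp only at h1 h2 ⊢
  linarith

lemma integral_sub_le_mul_blDist (μ ν : Measure (EuclideanSpace ℝ (Fin d)))
    [IsProbabilityMeasure μ] [IsProbabilityMeasure ν]
    {h : EuclideanSpace ℝ (Fin d) → ℝ} {B L : ℝ} (hB : ∀ x, |h x| ≤ B)
    (hL : ∀ x y, dist (h x) (h y) ≤ L * dist x y) :
    (∫ x, h x ∂μ) - ∫ x, h x ∂ν ≤ max B (max L 1) * blDist d μ ν := by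
  set M := max B (max L 1) with hMdef
  have hM1 : (1:ℝ) ≤ M := le_max_of_le_right (le_max_right _ _)
  have hM0 : (0:ℝ) < M := lt_of_lt_of_le one_pos hM1
  have hMB : B ≤ M := le_max_left _ _
  have hML : L ≤ M := le_max_of_le_right (le_max_left _ _)
  have hg1 : ∀ x, |h x / M| ≤ 1 := by
    intro x
    rw [abs_div, abs_of_pos hM0]
    exact (div_le_one hM0).2 ((hB x).trans hMB)
  have hg2 : LipschitzWith 1 (fun x => h x / M) := by
    refine LipschitzWith.of_dist_le_mul fun x y => ?_
    have heq : dist (h x / M) (h y / M) = dist (h x) (h y) / M := by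
      rw [Real.dist_eq, Real.dist_eq, div_sub_div_same, abs_div, abs_of_pos hM0]
    rw [heq, NNReal.coe_one, one_mul, div_le_iff₀ hM0]
    calc dist (h x) (h y) ≤ L * dist x y := hL x y
      _ ≤ dist x y * M := by nlinarith [dist_nonneg (x := x) (y := y)]
  have key := le_ciSup (blDist_bddAbove μ ν)
    (⟨fun x => h x / M, ⟨hg1, hg2⟩⟩ :
      {f : EuclideanSpace ℝ (Fin d) → ℝ // (∀ x, |f x| ≤ 1) ∧ LipschitzWith 1 f})
  try dsimp only at key
  rw [integral_div, integral_div, div_sub_div_same] at key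
  rw [blDist_eq]
  rw [div_le_iff₀ hM0] at key
  calc (∫ x, h x ∂μ) - ∫ x, h x ∂ν ≤ (⨆ f : {f : EuclideanSpace ℝ (Fin d) → ℝ //
        (∀ x, |f x| ≤ 1) ∧ LipschitzWith 1 f}, (∫ x, f.1 x ∂μ) - ∫ x, f.1 x ∂ν) * M := key
    _ = M * _ := mul_comm _ _

lemma abs_integral_sub_le_mul_blDist (μ ν : Measure (EuclideanSpace ℝ (Fin d)))
    [IsProbabilityMeasure μ] [IsProbabilityMeasure ν]
    {h : EuclideanSpace ℝ (Fin d) → ℝ} {B L : ℝ} (hB : ∀ x, |h x| ≤ B)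
    (hL : ∀ x y, dist (h x) (h y) ≤ L * dist x y) :
    |(∫ x, h x ∂μ) - ∫ x, h x ∂ν| ≤ max B (max L 1) * blDist d μ ν := by
  refine abs_sub_le_iff.2 ⟨integral_sub_le_mul_blDist μ ν hB hL, ?_⟩
  have := integral_sub_le_mul_blDist ν μ hB hL
  rwa [blDist_comm ν μ] at this

lemma tendsto_integral_of_blDist_tendsto_lip {ι : Type*} {l : Filter ι}
    {κs : ι → Measure (EuclideanSpace ℝ (Fin d))} {κ : Measure (EuclideanSpace ℝ (Fin d))}
    (hκs : ∀ i, IsProbabilityMeasure (κs i)) (hκ : IsProbabilityMeasure κ)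
    (hbl : Tendsto (fun i => blDist d (κs i) κ) l (𝓝 0))
    {h : EuclideanSpace ℝ (Fin d) → ℝ} {B L : ℝ} (hB : ∀ x, |h x| ≤ B)
    (hL : ∀ x y, dist (h x) (h y) ≤ L * dist x y) :
    Tendsto (fun i => ∫ x, h x ∂(κs i)) l (𝓝 (∫ x, h x ∂κ)) := by
  haveI := hκ
  have hzero : Tendsto (fun i => (∫ x, h x ∂(κs i)) - ∫ x, h x ∂κ) l (𝓝 0) := by
    refine squeeze_zero_norm (a := fun i => max B (max L 1) * blDist d (κs i) κ)
      (fun i => ?_) ?_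
    · haveI := hκs i
      rw [Real.norm_eq_abs]
      exact abs_integral_sub_le_mul_blDist (κs i) κ hB hL
    · simpa using hbl.const_mul (max B (max L 1))
  simpa using hzero.add_const (∫ x, h x ∂κ)

lemma probCoe {X : Type*} [MeasurableSpace X] (ν : ProbabilityMeasure X) (s : Set X) :
    ((ν s : ℝ≥0) : ℝ) = (ν.toMeasure s).toReal := by
  rw [ENNReal.toReal, ← ProbabilityMeasure.ennreal_coeFn_eq_coeFn_toMeasure,
    ENNReal.toNNReal_coe]

lemma tendsto_integral_of_blDist_tendsto
    {κs : ℕ → Measure (EuclideanSpace ℝ (Fin d))} {κ : Measure (EuclideanSpace ℝ (Fin d))}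
    (hκs : ∀ i, IsProbabilityMeasure (κs i)) (hκ : IsProbabilityMeasure κ)
    (hbl : Tendsto (fun i => blDist d (κs i) κ) atTop (𝓝 0))
    {g : EuclideanSpace ℝ (Fin d) → ℝ} (hgc : Continuous g) {B : ℝ} (hB : ∀ x, |g x| ≤ B) :
    Tendsto (fun i => ∫ x, g x ∂(κs i)) atTop (𝓝 (∫ x, g x ∂κ)) := by
  haveI := hκ
  set P : ℕ → ProbabilityMeasure (EuclideanSpace ℝ (Fin d)) := fun i => ⟨κs i, hκs i⟩ with hP
  set Q : ProbabilityMeasure (EuclideanSpace ℝ (Fin d)) := ⟨κ, hκ⟩ with hQ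
  have hweak : Tendsto P atTop (𝓝 Q) := by
    apply tendsto_of_forall_isOpen_le_liminf
    intro G hG
    rcases eq_empty_or_nonempty Gᶜ with hGc | hGc
    · have hGu : G = univ := by rwa [compl_empty_iff] at hGc
      subst hGu
      show Q univ ≤ liminf (fun i => P i univ) atTop
      simp only [ProbabilityMeasure.coeFn_univ]
      rw [liminf_const]
    · -- approximate the indicator of the open set G from below by Lipschitz functions
      set hm : ℕ → EuclideanSpace ℝ (Fin d) → ℝ :=
        fun m x => min 1 (((m:ℝ)+1) * Metric.infDist x Gᶜ) with hhm
      have h0 : ∀ m x, 0 ≤ hm m x :=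
        fun m x => le_min zero_le_one (mul_nonneg (by positivity) Metric.infDist_nonneg)
      have h1 : ∀ m x, hm m x ≤ 1 := fun m x => min_le_left _ _
      have hcont : ∀ m, Continuous (hm m) :=
        fun m => continuous_const.min (continuous_const.mul (Metric.continuous_infDist_pt _))
      have hminlip : ∀ a b : ℝ, |min 1 a - min 1 b| ≤ |a - b| := by
        intro a b
        rcases le_total 1 a with ha | ha <;> rcases le_total 1 b with hb | hb
        · rw [min_eq_left ha, min_eq_left hb]; simp [abs_nonneg]
        · rw [min_eq_left ha, min_eq_right hb, abs_le]
          constructor <;> nlinarith [le_abs_self (a - b), neg_abs_le (a - b), abs_nonneg (a - b)]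
        · rw [min_eq_right ha, min_eq_left hb, abs_le]
          constructor <;> nlinarith [le_abs_self (a - b), neg_abs_le (a - b), abs_nonneg (a - b)]
        · rw [min_eq_right ha, min_eq_right hb]
      have hmlip : ∀ (m : ℕ) (x y : EuclideanSpace ℝ (Fin d)),
          dist (hm m x) (hm m y) ≤ ((m:ℝ)+1) * dist x y := by
        intro m x y
        rw [Real.dist_eq]
        refine (hminlip _ _).trans ?_
        rw [← mul_sub, abs_mul, abs_of_nonneg (by positivity : (0:ℝ) ≤ (m:ℝ)+1)]
        have hd := (Metric.lipschitz_infDist_pt Gᶜ).dist_le_mul x y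
        rw [NNReal.coe_one, one_mul, Real.dist_eq] at hd
        have : (0:ℝ) ≤ (m:ℝ)+1 := by positivity
        nlinarith
      have hle_ind : ∀ (m : ℕ) x,
          ENNReal.ofReal (hm m x) ≤ G.indicator (fun _ => (1:ℝ≥0∞)) x := by
        intro m x
        by_cases hx : x ∈ G
        · rw [indicator_of_mem hx]
          calc ENNReal.ofReal (hm m x) ≤ ENNReal.ofReal 1 :=
                ENNReal.ofReal_le_ofReal (h1 m x)
            _ = 1 := ENNReal.ofReal_one
        · have hzero : Metric.infDist x Gᶜ = 0 := Metric.infDist_zero_of_mem hx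
          rw [indicator_of_notMem hx]
          simp [hhm, hzero]
      have hFint : ∀ ρ : Measure (EuclideanSpace ℝ (Fin d)),
          ∫⁻ x, G.indicator (fun _ => (1:ℝ≥0∞)) x ∂ρ = ρ G := by
        intro ρ
        have := lintegral_indicator_one (μ := ρ) hG.measurableSet
        simpa [Pi.one_def] using this
      have hmono : ∀ x, Monotone fun m : ℕ => ENNReal.ofReal (hm m x) := by
        intro x m k hmk
        apply ENNReal.ofReal_le_ofReal
        refine min_le_min le_rfl ?_
        refine mul_le_mul_of_nonneg_right ?_ Metric.infDist_nonneg
        have : (m:ℝ) ≤ (k:ℝ) := by exact_mod_cast hmk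
        linarith
      have htend_pt : ∀ x, Tendsto (fun m : ℕ => ENNReal.ofReal (hm m x)) atTop
          (𝓝 (G.indicator (fun _ => (1:ℝ≥0∞)) x)) := by
        intro x
        by_cases hx : x ∈ G
        · rw [indicator_of_mem hx]
          have hpos : 0 < Metric.infDist x Gᶜ :=
            (hG.isClosed_compl.notMem_iff_infDist_pos hGc).1 (by simpa using hx)
          have hev : ∀ᶠ m : ℕ in atTop, hm m x = 1 := by
            obtain ⟨n0, hn0⟩ := exists_nat_ge (1 / Metric.infDist x Gᶜ)
            filter_upwards [eventually_ge_atTop n0] with m hm'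
            have h1m : 1 / Metric.infDist x Gᶜ ≤ (m:ℝ) + 1 := by
              have : (n0:ℝ) ≤ (m:ℝ) := by exact_mod_cast hm'
              linarith
            have : 1 ≤ ((m:ℝ)+1) * Metric.infDist x Gᶜ := by
              rw [div_le_iff₀ hpos] at h1m
              linarith
            exact min_eq_left this
          refine Tendsto.congr' ?_ tendsto_const_nhds
          filter_upwards [hev] with m hm'
          rw [hm', ENNReal.ofReal_one]
        · rw [indicator_of_notMem hx]
          have hz : ∀ m : ℕ, hm m x = 0 := by
            intro m
            simp [hhm, Metric.infDist_zero_of_mem (show x ∈ Gᶜ from hx)]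
          simp only [hz, ENNReal.ofReal_zero]
          exact tendsto_const_nhds
      have hlim : Tendsto (fun m => ∫⁻ x, ENNReal.ofReal (hm m x) ∂κ) atTop (𝓝 (κ G)) := by
        rw [← hFint κ]
        apply lintegral_tendsto_of_tendsto_of_monotone
        · exact fun m => ((hcont m).measurable.ennreal_ofReal).aemeasurable
        · exact Eventually.of_forall hmono
        · exact Eventually.of_forall htend_pt
      have hint_eq : ∀ (ρ : Measure (EuclideanSpace ℝ (Fin d))) (m : ℕ),
          ∫ x, hm m x ∂ρ = (∫⁻ x, ENNReal.ofReal (hm m x) ∂ρ).toReal := fun ρ m =>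
        integral_eq_lintegral_of_nonneg_ae (Eventually.of_forall (h0 m))
          (hcont m).aestronglyMeasurable
      have hint_le : ∀ (ρ : Measure (EuclideanSpace ℝ (Fin d))), IsProbabilityMeasure ρ →
          ∀ m : ℕ, ∫ x, hm m x ∂ρ ≤ (ρ G).toReal := by
        intro ρ hρ m
        haveI := hρ
        rw [hint_eq ρ m]
        refine ENNReal.toReal_mono (measure_ne_top ρ G) ?_
        rw [← hFint ρ]
        exact lintegral_mono fun x => hle_ind m x
      have ha : Tendsto (fun m => ∫ x, hm m x ∂κ) atTop (𝓝 (κ G).toReal) := by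
        have := (ENNReal.tendsto_toReal (measure_ne_top κ G)).comp hlim
        refine Tendsto.congr ?_ this
        intro m
        exact (hint_eq κ m).symm
      -- now prove the liminf inequality in ℝ≥0
      refine le_of_forall_lt fun c hc => ?_
      obtain ⟨b', hcb', hb'Q⟩ := exists_between hc
      refine lt_of_lt_of_le hcb' ?_
      have hbQR : (b' : ℝ) < (κ G).toReal := by
        have := (NNReal.coe_lt_coe).2 hb'Q
        rwa [probCoe Q G] at this
      obtain ⟨m, hm_gt⟩ := (ha.eventually (eventually_gt_nhds hbQR)).exists
      have habs : ∀ x, |hm m x| ≤ 1 := fun x => abs_le.2 ⟨by linarith [h0 m x], h1 m x⟩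
      have hk := tendsto_integral_of_blDist_tendsto_lip hκs hκ hbl habs (hmlip m)
      have hev2 : ∀ᶠ i in atTop, (b' : ℝ) < ∫ x, hm m x ∂(κs i) :=
        hk.eventually (eventually_gt_nhds hm_gt)
      refine le_liminf_of_le ?_ ?_
      · refine IsBoundedUnder.isCoboundedUnder_ge ⟨1, ?_⟩
        exact eventually_map.2 (Eventually.of_forall fun i => ProbabilityMeasure.apply_le_one _ _)
      · filter_upwards [hev2] with i hi
        have hle := hint_le (κs i) (hκs i) m
        have : (b' : ℝ) < ((κs i) G).toReal := lt_of_lt_of_le hi hle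
        have hcoe : ((P i G : ℝ≥0) : ℝ) = ((κs i) G).toReal := probCoe (P i) G
        have : (b' : ℝ) ≤ ((P i G : ℝ≥0) : ℝ) := by rw [hcoe]; linarith
        exact_mod_cast this
  have := ProbabilityMeasure.tendsto_iff_forall_integral_tendsto.mp hweak
    (BoundedContinuousFunction.ofNormedAddCommGroup g hgc B
      (fun x => by rw [Real.norm_eq_abs]; exact hB x))
  simp at this
  exact this

lemma countable_of_no_right_acc {S : Set ℝ}
    (h : ∀ x : ℝ, ∃ δ > 0, ∀ y ∈ S, y ∉ Set.Ioo x (x + δ)) : S.Countable := by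
  choose δ hδ0 hδ using h
  have hq : ∀ x : ℝ, ∃ q : ℚ, x < (q:ℝ) ∧ (q:ℝ) < x + δ x :=
    fun x => exists_rat_btwn (by linarith [hδ0 x])
  choose q hq1 hq2 using hq
  rw [← Set.countable_coe_iff]
  have hinj : Function.Injective (fun e : S => q e) := by
    rintro ⟨a, ha⟩ ⟨b, hb⟩ hab
    simp only at hab
    apply Subtype.ext
    by_contra hne
    rcases lt_or_gt_of_ne hne with hlt | hlt
    · refine hδ a b hb ⟨hlt, ?_⟩
      calc b < (q b : ℝ) := hq1 b
        _ = (q a : ℝ) := by rw [hab]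
        _ < a + δ a := hq2 a
    · refine hδ b a ha ⟨hlt, ?_⟩
      calc a < (q a : ℝ) := hq1 a
        _ = (q b : ℝ) := by rw [hab]
        _ < b + δ b := hq2 b
  exact hinj.countable

lemma aux_aesm {T : ℝ} (hT : 0 < T)
    {f : ℝ → EuclideanSpace ℝ (Fin d) → ℝ} {C : ℝ}
    (hf_meas : Measurable (Function.uncurry f))
    (hC : ∀ t ∈ Set.Icc (0:ℝ) T, ∀ v, |f t v| ≤ C)
    (hf_cont : ∀ t ∈ Set.Icc (0:ℝ) T, Continuous (f t))
    (ν : ℝ → Measure (EuclideanSpace ℝ (Fin d)))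
    (hprob : ∀ t ∈ Set.Icc (0:ℝ) T, IsProbabilityMeasure (ν t))
    (hrc : ∀ t ∈ Set.Ico (0:ℝ) T,
      Tendsto (fun s => blDist d (ν s) (ν t)) (𝓝[Set.Ioc t T] t) (𝓝 0)) :
    AEStronglyMeasurable (fun t => ∫ v, f t v ∂(ν t)) (volume.restrict (Set.Icc 0 T)) := by
  have hkpos : ∀ k : ℕ, (0:ℝ) < (k:ℝ)+1 := fun k => by positivity
  set g : ℕ → ℝ → ℝ := fun k t =>
    min T (max (1/((k:ℝ)+1)) (((⌊t*((k:ℝ)+1)⌋ : ℝ) + 1)/((k:ℝ)+1))) with hg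
  have hgmem : ∀ k t, g k t ∈ Set.Icc (0:ℝ) T := by
    intro k t
    constructor
    · exact le_min hT.le (le_trans (by positivity) (le_max_left _ _))
    · exact min_le_left _ _
  have hgmeas : ∀ k, Measurable (g k) := by
    intro k
    apply Measurable.min measurable_const
    apply Measurable.max measurable_const
    apply Measurable.div_const
    apply Measurable.add_const
    exact (measurable_of_countable (fun j : ℤ => (j:ℝ))).comp
      ((measurable_id.mul_const _).floor)
  have hFk : ∀ k, Measurable (fun t => ∫ v, f t v ∂(ν (g k t))) := by
    intro k
    set Sfun : ℤ → ℝ := fun j =>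
      min T (max (1/((k:ℝ)+1)) (((j:ℝ)+1)/((k:ℝ)+1))) with hSfun
    have hrange : ∀ t, g k t ∈ Set.range Sfun := fun t => ⟨⌊t*((k:ℝ)+1)⌋, rfl⟩
    haveI : Countable (Set.range Sfun) := (Set.countable_range Sfun).to_subtype
    have hmemIcc : ∀ c : Set.range Sfun, (c:ℝ) ∈ Set.Icc (0:ℝ) T := by
      rintro ⟨c, j, rfl⟩
      exact ⟨le_min hT.le (le_trans (by positivity) (le_max_left _ _)), min_le_left _ _⟩
    have hΦ : Measurable (fun p : ℝ × Set.range Sfun => ∫ v, f p.1 v ∂(ν p.2)) := by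
      apply measurable_from_prod_countable_left
      intro c
      haveI := hprob c (hmemIcc c)
      haveI : SFinite (ν c) := inferInstance
      exact (MeasureTheory.StronglyMeasurable.integral_prod_right' (ν := ν (c : ℝ))
        (hf_meas.stronglyMeasurable)).measurable
    have heq : (fun t => ∫ v, f t v ∂(ν (g k t))) = fun t =>
        (fun p : ℝ × Set.range Sfun => ∫ v, f p.1 v ∂(ν p.2)) (t, ⟨g k t, hrange t⟩) := rfl
    rw [heq]
    exact hΦ.comp (measurable_id.prodMk ((hgmeas k).subtype_mk))
  have hconv : ∀ t ∈ Set.Ico (0:ℝ) T,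
      Tendsto (fun k => ∫ v, f t v ∂(ν (g k t))) atTop (𝓝 (∫ v, f t v ∂(ν t))) := by
    intro t ht
    have htIcc : t ∈ Set.Icc (0:ℝ) T := ⟨ht.1, ht.2.le⟩
    have hgt : ∀ k, t < g k t := by
      intro k
      refine lt_min ht.2 (lt_of_lt_of_le ?_ (le_max_right _ _))
      rw [lt_div_iff₀ (hkpos k)]
      exact Int.lt_floor_add_one (t*((k:ℝ)+1))
    have hgle : ∀ k, g k t ≤ t + 1/((k:ℝ)+1) := by
      intro k
      refine le_trans (min_le_right _ _) (max_le ?_ ?_)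
      · linarith [ht.1]
      · rw [div_le_iff₀ (hkpos k)]
        have hfl := Int.floor_le (t*((k:ℝ)+1))
        have : (t + 1/((k:ℝ)+1)) * ((k:ℝ)+1) = t * ((k:ℝ)+1) + 1 := by
          field_simp
        rw [this]
        linarith
    have hgtend : Tendsto (fun k => g k t) atTop (𝓝[Set.Ioc t T] t) := by
      apply tendsto_nhdsWithin_of_tendsto_nhds_of_eventually_within
      · have h1 : Tendsto (fun k : ℕ => t + 1/((k:ℝ)+1)) atTop (𝓝 t) := by
          have := tendsto_one_div_add_atTop_nhds_zero_nat (𝕜 := ℝ)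
          simpa using (tendsto_const_nhds (x := t) (f := atTop)).add this
        exact tendsto_of_tendsto_of_tendsto_of_le_of_le tendsto_const_nhds h1
          (fun k => (hgt k).le) hgle
      · exact Eventually.of_forall fun k => ⟨hgt k, (hgmem k t).2⟩
    have hbl : Tendsto (fun k => blDist d (ν (g k t)) (ν t)) atTop (𝓝 0) :=
      (hrc t ht).comp hgtend
    exact tendsto_integral_of_blDist_tendsto (fun k => hprob _ (hgmem k t))
      (hprob t htIcc) hbl (hf_cont t htIcc) (hC t htIcc)
  have hae_Ico : ∀ᵐ t ∂(volume.restrict (Set.Icc (0:ℝ) T)), t ∈ Set.Ico (0:ℝ) T := by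
    have h1 : ∀ᵐ t ∂(volume.restrict (Set.Icc (0:ℝ) T)), t ∈ Set.Icc (0:ℝ) T :=
      ae_restrict_mem measurableSet_Icc
    have h2 : (volume.restrict (Set.Icc (0:ℝ) T)) {T} = 0 := by
      rw [Measure.restrict_apply (measurableSet_singleton T)]
      exact measure_mono_null Set.inter_subset_left (measure_singleton T)
    have h3 : ∀ᵐ t ∂(volume.restrict (Set.Icc (0:ℝ) T)), t ∉ ({T} : Set ℝ) :=
      measure_eq_zero_iff_ae_notMem.mp h2
    filter_upwards [h1, h3] with t h1t h3t
    exact ⟨h1t.1, lt_of_le_of_ne h1t.2 (by simpa using h3t)⟩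
  exact aestronglyMeasurable_of_tendsto_ae atTop
    (fun k => ((hFk k).stronglyMeasurable).aestronglyMeasurable)
    (hae_Ico.mono fun t ht => hconv t ht)

end Aux

/-- if `f : [0,T]×ℝ^d → ℝ` is measurable, uniformly bounded, and
continuous in the velocity variable, and `μ^n_• → μ_•` in the Skorokhod metric built
from the bounded-Lipschitz metric `W`, then
`∫₀^T ∫ f(t,v) μ^n_t(dv) dt → ∫₀^T ∫ f(t,v) μ_t(dv) dt`. -/
theorem time_integral_convergence_of_skorokhod (d : ℕ) (T : ℝ) (hT : 0 < T)
    (f : ℝ → EuclideanSpace ℝ (Fin d) → ℝ)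
    (hf_meas : Measurable (Function.uncurry f))
    (hf_bdd : ∃ C, ∀ t ∈ Set.Icc (0 : ℝ) T, ∀ v, |f t v| ≤ C)
    (hf_cont : ∀ t ∈ Set.Icc (0 : ℝ) T, Continuous (f t))
    (μn : ℕ → ℝ → Measure (EuclideanSpace ℝ (Fin d)))
    (μ : ℝ → Measure (EuclideanSpace ℝ (Fin d)))
    (hprobn : ∀ n, ∀ t ∈ Set.Icc (0 : ℝ) T, IsProbabilityMeasure (μn n t))
    (hprob : ∀ t ∈ Set.Icc (0 : ℝ) T, IsProbabilityMeasure (μ t))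
    (hmomn : ∀ n, ∀ t ∈ Set.Icc (0 : ℝ) T,
      ∫⁻ v, ENNReal.ofReal (‖v‖ ^ 2) ∂(μn n t) < ⊤)
    (hmom : ∀ t ∈ Set.Icc (0 : ℝ) T, ∫⁻ v, ENNReal.ofReal (‖v‖ ^ 2) ∂(μ t) < ⊤)
    (hcadn : ∀ n, CadlagW d T (μn n)) (hcad : CadlagW d T μ)
    (hconv : Tendsto (fun n => skorokhodW d T (μn n) μ) atTop (𝓝 0)) :
    Tendsto (fun n => ∫ t in Set.Icc (0 : ℝ) T, (∫ v, f t v ∂(μn n t))) atTop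
      (𝓝 (∫ t in Set.Icc (0 : ℝ) T, (∫ v, f t v ∂(μ t)))) := by
  classical
  obtain ⟨C, hC⟩ := hf_bdd
  have hC0 : 0 ≤ C := le_trans (abs_nonneg _) (hC 0 ⟨le_refl 0, hT.le⟩ 0)
  -- ε sequence and reparametrizations
  set ε : ℕ → ℝ := fun n => skorokhodW d T (μn n) μ + 1/((n:ℝ)+1) with hε
  have hεtend : Tendsto ε atTop (𝓝 0) := by
    have h := hconv.add tendsto_one_div_add_atTop_nhds_zero_nat
    rw [add_zero] at h
    exact h
  haveI hne : Nonempty {ι : ℝ → ℝ // ContinuousOn ι (Set.Icc 0 T) ∧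
      StrictMonoOn ι (Set.Icc 0 T) ∧ Set.BijOn ι (Set.Icc 0 T) (Set.Icc 0 T)} :=
    ⟨⟨id, continuousOn_id, fun a _ b _ h => h, Set.bijOn_id _⟩⟩
  have hιex : ∀ n, ∃ ι : {ι : ℝ → ℝ // ContinuousOn ι (Set.Icc 0 T) ∧
      StrictMonoOn ι (Set.Icc 0 T) ∧ Set.BijOn ι (Set.Icc 0 T) (Set.Icc 0 T)},
      (∀ t ∈ Set.Icc (0:ℝ) T, blDist d (μn n t) (μ (ι.1 t)) ≤ ε n) ∧
      (∀ t ∈ Set.Icc (0:ℝ) T, |t - ι.1 t| ≤ ε n) := by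
    intro n
    have hlt : skorokhodW d T (μn n) μ < ε n := by
      rw [hε]
      have : (0:ℝ) < 1/((n:ℝ)+1) := by positivity
      linarith
    rw [show skorokhodW d T (μn n) μ = _ from rfl] at hlt
    obtain ⟨ι, hιlt⟩ := exists_lt_of_ciInf_lt hlt
    refine ⟨ι, fun t ht => ?_, fun t ht => ?_⟩
    · have hb : BddAbove (Set.range fun s : Set.Icc (0:ℝ) T =>
          blDist d (μn n s) (μ (ι.1 s))) := by
        refine ⟨2, ?_⟩
        rintro y ⟨s, rfl⟩
        haveI := hprobn n s s.2
        haveI := hprob _ (ι.2.2.2.mapsTo s.2)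
        exact blDist_le_two _ _
      have := le_ciSup hb (⟨t, ht⟩ : Set.Icc (0:ℝ) T)
      exact le_trans this (le_trans (le_max_left _ _) hιlt.le)
    · have hb : BddAbove (Set.range fun s : Set.Icc (0:ℝ) T => |(s:ℝ) - ι.1 s|) := by
        refine ⟨T, ?_⟩
        rintro y ⟨s, rfl⟩
        have h1 := s.2
        have h2 := ι.2.2.2.mapsTo s.2
        rw [abs_le]
        exact ⟨by linarith [h1.1, h2.2], by linarith [h1.2, h2.1]⟩
      have := le_ciSup hb (⟨t, ht⟩ : Set.Icc (0:ℝ) T)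
      exact le_trans this (le_trans (le_max_right _ _) hιlt.le)
  choose ι hι1 hι2 using hιex
  -- the countable set of "left-jump" times
  have hEcnt : ∀ εp : ℝ, 0 < εp →
      {t | t ∈ Set.Ioc (0:ℝ) T ∧
        ¬ ∃ δ > 0, ∀ s ∈ Set.Ioo (t - δ) t, blDist d (μ s) (μ t) ≤ εp}.Countable := by
    intro εp hεp
    apply countable_of_no_right_acc
    intro x
    rcases lt_or_ge x 0 with hx | hx
    · refine ⟨-x, by linarith, ?_⟩
      rintro y ⟨⟨hy1, _⟩, _⟩ hy2
      have : y < 0 := by linarith [hy2.2]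
      linarith
    rcases lt_or_ge x T with hxT | hxT
    swap
    · refine ⟨1, one_pos, ?_⟩
      rintro y ⟨⟨_, hy2'⟩, _⟩ hy2
      linarith [hy2.1]
    · have hrcx := hcad.1 x ⟨hx, hxT⟩
      have hmem : {r : ℝ | blDist d (μ r) (μ x) < εp/3} ∈ 𝓝[Set.Ioc x T] x :=
        hrcx (Iio_mem_nhds (by positivity))
      rw [Metric.mem_nhdsWithin_iff] at hmem
      obtain ⟨δ, hδ0, hδ⟩ := hmem
      refine ⟨min δ (T - x), lt_min hδ0 (by linarith), ?_⟩
      rintro y ⟨hyIoc, hyP⟩ hy2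
      obtain ⟨hy2a, hy2b⟩ := hy2
      have hyT : y ≤ T := by
        have := min_le_right δ (T - x)
        linarith
      have hyδ : y < x + δ := by
        have := min_le_left δ (T - x)
        linarith
      apply hyP
      have hyx : blDist d (μ y) (μ x) < εp/3 := by
        apply hδ
        constructor
        · rw [Metric.mem_ball, Real.dist_eq, abs_lt]
          constructor <;> linarith
        · exact ⟨hy2a, hyT⟩
      refine ⟨y - x, by linarith, fun s hs => ?_⟩
      have hsx : x < s := by
        have := hs.1
        linarith
      have hsy : s < y := hs.2
      have hsmem : blDist d (μ s) (μ x) < εp/3 := by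
        apply hδ
        constructor
        · rw [Metric.mem_ball, Real.dist_eq, abs_lt]
          constructor <;> linarith
        · exact ⟨hsx, by linarith⟩
      haveI := hprob s ⟨by linarith, by linarith⟩
      haveI := hprob x ⟨hx, hxT.le⟩
      haveI := hprob y ⟨by linarith [hyIoc.1], hyT⟩
      have htri : blDist d (μ s) (μ y) ≤ blDist d (μ s) (μ x) + blDist d (μ x) (μ y) :=
        blDist_triangle _ _ _
      have hcomm : blDist d (μ x) (μ y) = blDist d (μ y) (μ x) := blDist_comm _ _
      linarith
  set Dset : Set ℝ := ⋃ m : ℕ, {t | t ∈ Set.Ioc (0:ℝ) T ∧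
      ¬ ∃ δ > 0, ∀ s ∈ Set.Ioo (t - δ) t, blDist d (μ s) (μ t) ≤ 1/((m:ℝ)+1)} with hD
  have hDcnt : Dset.Countable :=
    Set.countable_iUnion fun m => hEcnt _ (by positivity)
  have hleft : ∀ t ∈ Set.Ioo (0:ℝ) T, t ∉ Dset → ∀ εp > 0,
      ∃ δ > 0, ∀ s ∈ Set.Ioo (t - δ) t, blDist d (μ s) (μ t) ≤ εp := by
    intro t ht htD εp hεp
    obtain ⟨m, hm⟩ := exists_nat_one_div_lt hεp
    have hnot : t ∉ {t | t ∈ Set.Ioc (0:ℝ) T ∧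
        ¬ ∃ δ > 0, ∀ s ∈ Set.Ioo (t - δ) t, blDist d (μ s) (μ t) ≤ 1/((m:ℝ)+1)} :=
      fun hmem => htD (by rw [hD]; exact Set.mem_iUnion.2 ⟨m, hmem⟩)
    simp only [Set.mem_setOf_eq, not_and, not_not] at hnot
    obtain ⟨δ, hδ0, hδ⟩ := hnot ⟨ht.1, ht.2.le⟩
    refine ⟨δ, hδ0, fun s hs => le_trans (hδ s hs) ?_⟩
    exact_mod_cast hm.le
  -- pointwise convergence of blDist at good times
  have hptBL : ∀ t ∈ Set.Ioo (0:ℝ) T, t ∉ Dset →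
      Tendsto (fun n => blDist d (μn n t) (μ t)) atTop (𝓝 0) := by
    intro t ht htD
    have htIcc : t ∈ Set.Icc (0:ℝ) T := ⟨ht.1.le, ht.2.le⟩
    haveI := hprob t htIcc
    rw [tendsto_order]
    constructor
    · intro a ha
      refine Eventually.of_forall fun n => lt_of_lt_of_le ha ?_
      haveI := hprobn n t htIcc
      exact blDist_nonneg _ _
    · intro a ha
      obtain ⟨δL, hδL0, hδL⟩ := hleft t ht htD (a/3) (by linarith)
      have hrcx := hcad.1 t ⟨ht.1.le, ht.2⟩
      have hmem : {r : ℝ | blDist d (μ r) (μ t) < a/3} ∈ 𝓝[Set.Ioc t T] t :=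
        hrcx (Iio_mem_nhds (by linarith))
      rw [Metric.mem_nhdsWithin_iff] at hmem
      obtain ⟨δR, hδR0, hδR⟩ := hmem
      have hev : ∀ᶠ n in atTop, ε n < min (min δL δR) (a/3) :=
        hεtend.eventually_lt_const (lt_min (lt_min hδL0 hδR0) (by linarith))
      filter_upwards [hev] with n hn
      haveI := hprobn n t htIcc
      have hsIcc : (ι n).1 t ∈ Set.Icc (0:ℝ) T := (ι n).2.2.2.mapsTo htIcc
      haveI := hprob _ hsIcc
      have h2' := hι2 n t htIcc
      have hab := abs_le.1 h2'
      have hεδL : ε n < δL := lt_of_lt_of_le hn (le_trans (min_le_left _ _) (min_le_left _ _))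
      have hεδR : ε n < δR := lt_of_lt_of_le hn (le_trans (min_le_left _ _) (min_le_right _ _))
      have hεa : ε n < a/3 := lt_of_lt_of_le hn (min_le_right _ _)
      have hsecond : blDist d (μ ((ι n).1 t)) (μ t) ≤ a/3 := by
        rcases lt_trichotomy ((ι n).1 t) t with hst | hst | hst
        · refine hδL _ ⟨?_, hst⟩
          linarith [hab.2]
        · rw [hst, blDist_self]
          linarith
        · refine (hδR ⟨?_, hst, hsIcc.2⟩).le
          rw [Metric.mem_ball, Real.dist_eq, abs_lt]
          constructor <;> linarith [hab.1, hab.2]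
      have h1' := hι1 n t htIcc
      have htri : blDist d (μn n t) (μ t) ≤
          blDist d (μn n t) (μ ((ι n).1 t)) + blDist d (μ ((ι n).1 t)) (μ t) :=
        blDist_triangle _ _ _
      have hfin : blDist d (μn n t) (μ t) ≤ ε n + a/3 :=
        htri.trans (add_le_add h1' hsecond)
      have : ε n + a/3 < a := by linarith
      linarith
  -- pointwise convergence of the integrands
  have hptInt : ∀ t ∈ Set.Ioo (0:ℝ) T, t ∉ Dset →
      Tendsto (fun n => ∫ v, f t v ∂(μn n t)) atTop (𝓝 (∫ v, f t v ∂(μ t))) := by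
    intro t ht htD
    have htIcc : t ∈ Set.Icc (0:ℝ) T := ⟨ht.1.le, ht.2.le⟩
    exact tendsto_integral_of_blDist_tendsto (fun n => hprobn n t htIcc) (hprob t htIcc)
      (hptBL t ht htD) (hf_cont t htIcc) (hC t htIcc)
  -- almost every point of [0,T] is good
  have hbad : ∀ᵐ t ∂(volume.restrict (Set.Icc (0:ℝ) T)), t ∈ Set.Ioo (0:ℝ) T ∧ t ∉ Dset := by
    have h0' : (volume : Measure ℝ) (insert 0 (insert T Dset)) = 0 :=
      ((hDcnt.insert T).insert 0).measure_zero _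
    have h1 : ∀ᵐ t ∂(volume : Measure ℝ), t ∉ insert (0:ℝ) (insert T Dset) :=
      measure_eq_zero_iff_ae_notMem.mp h0'
    have h2 : ∀ᵐ t ∂(volume.restrict (Set.Icc (0:ℝ) T)),
        t ∉ insert (0:ℝ) (insert T Dset) := ae_restrict_of_ae h1
    filter_upwards [ae_restrict_mem measurableSet_Icc, h2] with t htIcc htn
    simp only [Set.mem_insert_iff, not_or] at htn
    exact ⟨⟨lt_of_le_of_ne htIcc.1 (Ne.symm htn.1), lt_of_le_of_ne htIcc.2 htn.2.1⟩, htn.2.2⟩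
  -- dominated convergence
  apply tendsto_integral_of_dominated_convergence (fun _ => C)
  · intro n
    exact aux_aesm hT hf_meas hC hf_cont (μn n) (hprobn n) ((hcadn n).1)
  · exact integrable_const _
  · intro n
    filter_upwards [ae_restrict_mem measurableSet_Icc] with t htIcc
    haveI := hprobn n t htIcc
    have := norm_integral_le_of_norm_le_const (μ := μn n t) (f := fun v => f t v) (C := C)
      (Eventually.of_forall fun v => by rw [Real.norm_eq_abs]; exact hC t htIcc v)
    simpa using this
  · filter_upwards [hbad] with t ht
    exact hptInt t ht.1 ht.2
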